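/- Let d ≥ 1, let θ ∈ ℝ^d, let ε_1,…,ε_d be i.i.d. random variables with the standard Gumbel distribution, and let r ∈ {1,…,d}. Then P(θ_r + ε_r > θ_j + ε_j for all j ≠ r) = e^{θ_r} / Σ_{j=1}^d e^{θ_j} (the Gumbel-argmax, or softmax, reparameterization is exact). -/

import Mathlib

open MeasureTheory Real Filter Set

lemma gkey_deriv (b : ℝ) (hb : 0 < b) (x : ℝ) :
    HasDerivAt (fun x : ℝ => b⁻¹ * Real.exp (-(b * Real.exp (-x))))
      (Real.exp (-x - b * Real.exp (-x))) x := by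
  have h1 : HasDerivAt (fun x : ℝ => -x) (-1) x := (hasDerivAt_id x).neg
  have h2 : HasDerivAt (fun x : ℝ => Real.exp (-x)) (Real.exp (-x) * (-1)) x := h1.exp
  have h3 : HasDerivAt (fun x : ℝ => -(b * Real.exp (-x)))
      (-(b * (Real.exp (-x) * (-1)))) x := (h2.const_mul b).neg
  have h5 := h3.exp.const_mul b⁻¹
  refine h5.congr_deriv ?_
  rw [show -x - b * Real.exp (-x) = (-(b * Real.exp (-x))) + (-x) by ring, Real.exp_add]
  field_simp

lemma gkey_cont (b : ℝ) : Continuous (fun x : ℝ => Real.exp (-x - b * Real.exp (-x))) := by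
  continuity

lemma gkey_tendsto_bot (b : ℝ) (hb : 0 < b) :
    Tendsto (fun x : ℝ => b⁻¹ * Real.exp (-(b * Real.exp (-x)))) atBot (nhds 0) := by
  have h1 : Tendsto (fun x : ℝ => Real.exp (-x)) atBot atTop :=
    Real.tendsto_exp_atTop.comp tendsto_neg_atBot_atTop
  have h2 : Tendsto (fun x : ℝ => -(b * Real.exp (-x))) atBot atBot :=
    tendsto_neg_atTop_atBot.comp (h1.const_mul_atTop hb)
  have h3 := Real.tendsto_exp_atBot.comp h2
  simpa using h3.const_mul b⁻¹

lemma gkey_tendsto_top (b : ℝ) (hb : 0 < b) :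
    Tendsto (fun x : ℝ => b⁻¹ * Real.exp (-(b * Real.exp (-x)))) atTop (nhds b⁻¹) := by
  have h1 : Tendsto (fun x : ℝ => Real.exp (-x)) atTop (nhds 0) :=
    Real.tendsto_exp_atBot.comp tendsto_neg_atTop_atBot
  have h2 : Tendsto (fun x : ℝ => -(b * Real.exp (-x))) atTop (nhds 0) := by
    simpa using (h1.const_mul b).neg
  have h3 := (Real.continuous_exp.tendsto 0).comp h2
  simpa using h3.const_mul b⁻¹

lemma gkey_integrableOn_Iic (b : ℝ) (hb : 0 < b) (c : ℝ) :
    IntegrableOn (fun x : ℝ => Real.exp (-x - b * Real.exp (-x))) (Iic c) := by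
  set g := fun x : ℝ => Real.exp (-x - b * Real.exp (-x)) with hg
  set G := fun x : ℝ => b⁻¹ * Real.exp (-(b * Real.exp (-x))) with hG
  have key : ∀ i : ℝ, (∫ x in i..c, ‖g x‖) = G c - G i := by
    intro i
    have : (fun x => ‖g x‖) = g := by
      funext x; exact Real.norm_of_nonneg (Real.exp_nonneg _)
    rw [this]
    exact intervalIntegral.integral_eq_sub_of_hasDerivAt (fun x _ => gkey_deriv b hb x)
      ((gkey_cont b).intervalIntegrable _ _)
  apply integrableOn_Iic_of_intervalIntegral_norm_tendsto (G c) c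
    (fun i : ℝ => ((gkey_cont b).integrableOn_Icc).mono_set Ioc_subset_Icc_self) tendsto_id
  change Tendsto (fun i => ∫ x in id i..c, ‖g x‖) atBot (nhds (G c))
  simp only [id, key]
  simpa using (tendsto_const_nhds (x := G c)).sub ((gkey_tendsto_bot b hb).comp tendsto_id)

lemma gkey_integrable (b : ℝ) (hb : 0 < b) :
    Integrable (fun x : ℝ => Real.exp (-x - b * Real.exp (-x))) := by
  have h2 : IntegrableOn (fun x : ℝ => Real.exp (-x - b * Real.exp (-x))) (Ioi 0) := by
    refine integrableOn_Ioi_deriv_of_nonneg' (g := fun x : ℝ => b⁻¹ * Real.exp (-(b * Real.exp (-x))))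
      (fun x _ => gkey_deriv b hb x) (fun x _ => Real.exp_nonneg _) (gkey_tendsto_top b hb)
  have := (gkey_integrableOn_Iic b hb 0).union h2
  rwa [Iic_union_Ioi, integrableOn_univ] at this

lemma gkey_integral (b : ℝ) (hb : 0 < b) :
    ∫ x : ℝ, Real.exp (-x - b * Real.exp (-x)) = b⁻¹ := by
  have := integral_of_hasDerivAt_of_tendsto (fun x => gkey_deriv b hb x)
    (gkey_integrable b hb) (gkey_tendsto_bot b hb) (gkey_tendsto_top b hb)
  simpa using this

lemma gkey_integral_Iic (b : ℝ) (hb : 0 < b) (c : ℝ) :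
    ∫ x in Iic c, Real.exp (-x - b * Real.exp (-x))
      = b⁻¹ * Real.exp (-(b * Real.exp (-c))) := by
  have := integral_Iic_of_hasDerivAt_of_tendsto'
    (f := fun x : ℝ => b⁻¹ * Real.exp (-(b * Real.exp (-x))))
    (fun x _ => gkey_deriv b hb x) (gkey_integrableOn_Iic b hb c) (gkey_tendsto_bot b hb)
  simpa using this

lemma gumbel_Iio (c : ℝ) :
    (volume.withDensity (fun x => ENNReal.ofReal (Real.exp (-x - Real.exp (-x))))) (Iio c)
      = ENNReal.ofReal (Real.exp (-Real.exp (-c))) := by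
  have he : (fun x : ℝ => Real.exp (-x - Real.exp (-x)))
      = fun x => Real.exp (-x - 1 * Real.exp (-x)) := by norm_num
  rw [withDensity_apply _ measurableSet_Iio,
    setLIntegral_congr (Iio_ae_eq_Iic (a := c))]
  rw [← ofReal_integral_eq_lintegral_ofReal]
  · rw [he, gkey_integral_Iic 1 one_pos c]; norm_num
  · rw [he]; exact gkey_integrableOn_Iic 1 one_pos c
  · exact Filter.Eventually.of_forall fun x => Real.exp_nonneg _

lemma gumbel_prob :
    IsProbabilityMeasure
      (volume.withDensity (fun x => ENNReal.ofReal (Real.exp (-x - Real.exp (-x))))) := by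
  constructor
  have he : (fun x : ℝ => Real.exp (-x - Real.exp (-x)))
      = fun x => Real.exp (-x - 1 * Real.exp (-x)) := by norm_num
  rw [withDensity_apply _ MeasurableSet.univ, Measure.restrict_univ,
    ← ofReal_integral_eq_lintegral_ofReal]
  · rw [he, gkey_integral 1 one_pos]; norm_num
  · rw [he]; exact gkey_integrable 1 one_pos
  · exact Filter.Eventually.of_forall fun x => Real.exp_nonneg _

/-- Exactness of the Gumbel-argmax (softmax) reparameterization: with `ε_1,…,ε_d`
i.i.d. standard Gumbel, `P(θ_r + ε_r > θ_j + ε_j ∀ j ≠ r) = e^{θ_r}/Σ_j e^{θ_j}`. -/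
theorem stmt14 (d : ℕ) (hd : 1 ≤ d) (θ : Fin d → ℝ) (r : Fin d)
    (gumbel : Measure ℝ)
    (hgumbel : gumbel =
      volume.withDensity (fun x => ENNReal.ofReal (Real.exp (-x - Real.exp (-x))))) :
    (Measure.pi fun _ : Fin d => gumbel)
        {ε : Fin d → ℝ | ∀ j : Fin d, j ≠ r → θ j + ε j < θ r + ε r}
      = ENNReal.ofReal (Real.exp (θ r) / ∑ j : Fin d, Real.exp (θ j)) := by
  obtain ⟨n, rfl⟩ : ∃ n, d = n + 1 := ⟨d - 1, by omega⟩
  subst hgumbel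
  set ρ : ℝ → ENNReal := fun x => ENNReal.ofReal (Real.exp (-x - Real.exp (-x))) with hρ
  haveI : IsProbabilityMeasure (volume.withDensity ρ) := gumbel_prob
  set μ : Measure ℝ := volume.withDensity ρ with hμ
  set a : ℝ := Real.exp (-θ r) * ∑ j : Fin n, Real.exp (θ (r.succAbove j)) with ha
  have ha0 : 0 ≤ a := mul_nonneg (Real.exp_nonneg _)
    (Finset.sum_nonneg fun j _ => (Real.exp_nonneg _))
  have h1a : (0:ℝ) < 1 + a := by linarith
  have hSa : Real.exp (-θ r) * ∑ j : Fin (n+1), Real.exp (θ j) = 1 + a := by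
    rw [Fin.sum_univ_succAbove _ r, mul_add, ← Real.exp_add, ha]
    norm_num
  set T : Set (ℝ × (Fin n → ℝ)) :=
    {p | ∀ j : Fin n, θ (r.succAbove j) + p.2 j < θ r + p.1} with hT
  have hTm : MeasurableSet T := by
    rw [hT, Set.setOf_forall]
    exact MeasurableSet.iInter fun j => measurableSet_lt (by fun_prop) (by fun_prop)
  have hpre : (MeasurableEquiv.piFinSuccAbove (fun _ : Fin (n+1) => ℝ) r) ⁻¹' T
      = {ε : Fin (n+1) → ℝ | ∀ j, j ≠ r → θ j + ε j < θ r + ε r} := by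
    ext ε
    simp only [Set.mem_preimage, MeasurableEquiv.piFinSuccAbove, MeasurableEquiv.coe_mk,
      Fin.insertNthEquiv, Equiv.coe_fn_symm_mk, hT, Set.mem_setOf_eq, Fin.removeNth]
    constructor
    · intro h j hj
      obtain ⟨k, rfl⟩ := Fin.exists_succAbove_eq hj
      exact h k
    · intro h k
      exact h _ (Fin.succAbove_ne r k)
  rw [← hpre,
    (measurePreserving_piFinSuccAbove (fun _ : Fin (n+1) => μ) r).measure_preimage_equiv,
    Measure.prod_apply hTm]
  have hsecval : ∀ t : ℝ, (Measure.pi fun _ : Fin n => μ) (Prod.mk t ⁻¹' T)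
      = ENNReal.ofReal (Real.exp (-(a * Real.exp (-t)))) := by
    intro t
    have hsec : (Prod.mk t ⁻¹' T)
        = Set.univ.pi (fun j : Fin n => Iio (θ r + t - θ (r.succAbove j))) := by
      ext y
      simp only [Set.mem_preimage, hT, Set.mem_setOf_eq, Set.mem_pi, Set.mem_univ,
        true_implies, Set.mem_Iio]
      exact forall_congr' fun j => lt_sub_iff_add_lt'.symm
    rw [hsec, Measure.pi_pi]
    have h1 : ∀ j : Fin n, μ (Iio (θ r + t - θ (r.succAbove j)))
        = ENNReal.ofReal (Real.exp (-Real.exp (-(θ r + t - θ (r.succAbove j))))) :=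
      fun j => gumbel_Iio _
    simp_rw [h1]
    rw [← ENNReal.ofReal_prod_of_nonneg (fun j _ => Real.exp_nonneg _)]
    congr 1
    rw [← Real.exp_sum]
    congr 1
    have h2 : ∀ j : Fin n, Real.exp (-(θ r + t - θ (r.succAbove j)))
        = Real.exp (θ (r.succAbove j)) * (Real.exp (-θ r) * Real.exp (-t)) := by
      intro j
      rw [← Real.exp_add, ← Real.exp_add]
      congr 1
      ring
    simp_rw [Finset.sum_neg_distrib, h2, ← Finset.sum_mul]
    rw [ha]
    ring
  simp_rw [hsecval]
  rw [hμ, lintegral_withDensity_eq_lintegral_mul _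
    ((Continuous.measurable (by continuity)).ennreal_ofReal)
    ((Continuous.measurable (by continuity)).ennreal_ofReal)]
  have h3 : ∀ t : ℝ, ((ρ : ℝ → ENNReal) * fun t => ENNReal.ofReal (Real.exp (-(a * Real.exp (-t))))) t
      = ENNReal.ofReal (Real.exp (-t - (1+a) * Real.exp (-t))) := by
    intro t
    simp only [Pi.mul_apply, hρ]
    rw [← ENNReal.ofReal_mul (Real.exp_nonneg _), ← Real.exp_add]
    congr 1
    ring
  change ∫⁻ t, (ρ * fun t => ENNReal.ofReal (Real.exp (-(a * Real.exp (-t))))) t = _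
  simp_rw [h3]
  rw [← ofReal_integral_eq_lintegral_ofReal (gkey_integrable (1+a) h1a)
    (Filter.Eventually.of_forall fun x => Real.exp_nonneg _), gkey_integral (1+a) h1a]
  congr 1
  rw [← hSa, mul_inv, Real.exp_neg, inv_inv, ← div_eq_mul_inv]
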